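/- If H : Q^op → Set preserves binary products (sends coproducts in Q to products in Set) and G : Q^op → Set is arbitrary, then the Day convolution internal hom (G ⊸_Day H)(C) = ∫_A Set(G A, H(C ⊗ A)) also preserves binary products, provided the tensor of Q distributes over binary coproducts. -/

import Mathlib

open CategoryTheory CategoryTheory.Limits MonoidalCategory Opposite

universe v u

variable {Q : Type u} [Category.{v} Q] [MonoidalCategory Q] [SymmetricCategory Q]
  [HasBinaryCoproducts Q]

/-- Restriction natural transformation `H((C₁+C₂) ⊗ -) ⟶ H(C ⊗ -)` induced by a map
`j : C ⟶ C'` (applied with the coproduct injections below). -/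
def restrictNat (H : Qᵒᵖ ⥤ Type v) {C C' : Q} (j : C ⟶ C') :
    (tensorLeft C').op ⋙ H ⟶ (tensorLeft C).op ⋙ H where
  app X := H.map ((j ▷ X.unop).op)
  naturality X Y f := by
    dsimp
    rw [← H.map_comp, ← H.map_comp, whisker_exchange]

lemma day_aux_isIso (C₁ C₂ D : Q)
    (hc : IsColimit (BinaryCofan.mk (D ◁ (coprod.inl : C₁ ⟶ C₁ ⨿ C₂))
      (D ◁ (coprod.inr : C₂ ⟶ C₁ ⨿ C₂)))) :
    IsIso (coprod.desc ((coprod.inl : C₁ ⟶ C₁ ⨿ C₂) ▷ D)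
      ((coprod.inr : C₂ ⟶ C₁ ⨿ C₂) ▷ D)) := by
  set k := coprod.desc ((coprod.inl : C₁ ⟶ C₁ ⨿ C₂) ▷ D)
      ((coprod.inr : C₂ ⟶ C₁ ⨿ C₂) ▷ D) with hk
  set s : BinaryCofan (D ⊗ C₁) (D ⊗ C₂) :=
    BinaryCofan.mk ((β_ D C₁).hom ≫ (coprod.inl : C₁ ⊗ D ⟶ _))
      ((β_ D C₂).hom ≫ (coprod.inr : C₂ ⊗ D ⟶ _)) with hs
  have hfl : D ◁ (coprod.inl : C₁ ⟶ C₁ ⨿ C₂) ≫ hc.desc s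
      = (β_ D C₁).hom ≫ coprod.inl := hc.fac s ⟨WalkingPair.left⟩
  have hfr : D ◁ (coprod.inr : C₂ ⟶ C₁ ⨿ C₂) ≫ hc.desc s
      = (β_ D C₂).hom ≫ coprod.inr := hc.fac s ⟨WalkingPair.right⟩
  obtain ⟨d, hd⟩ : ∃ d : D ⊗ (C₁ ⨿ C₂) ⟶ C₁ ⊗ D ⨿ C₂ ⊗ D, d = hc.desc s := ⟨_, rfl⟩
  replace hfl : D ◁ (coprod.inl : C₁ ⟶ C₁ ⨿ C₂) ≫ d = (β_ D C₁).hom ≫ coprod.inl := by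
    subst hd; exact hfl
  replace hfr : D ◁ (coprod.inr : C₂ ⟶ C₁ ⨿ C₂) ≫ d = (β_ D C₂).hom ≫ coprod.inr := by
    subst hd; exact hfr
  refine ⟨(β_ (C₁ ⨿ C₂) D).hom ≫ d, ?_, ?_⟩
  · apply coprod.hom_ext
    · rw [hk, coprod.inl_desc_assoc, Category.comp_id,
        BraidedCategory.braiding_naturality_left_assoc, hfl,
        SymmetricCategory.symmetry_assoc]
    · rw [hk, coprod.inr_desc_assoc, Category.comp_id,
        BraidedCategory.braiding_naturality_left_assoc, hfr,
        SymmetricCategory.symmetry_assoc]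
  · have h : d ≫ k = (β_ (C₁ ⨿ C₂) D).inv := by
      apply BinaryCofan.IsColimit.hom_ext hc
      · show D ◁ _ ≫ _ = D ◁ _ ≫ _
        rw [reassoc_of% hfl, ← SymmetricCategory.braiding_swap_eq_inv_braiding,
          BraidedCategory.braiding_naturality_right, hk, coprod.inl_desc]
      · show D ◁ _ ≫ _ = D ◁ _ ≫ _
        rw [reassoc_of% hfr, ← SymmetricCategory.braiding_swap_eq_inv_braiding,
          BraidedCategory.braiding_naturality_right, hk, coprod.inr_desc]
    rw [Category.assoc, h, Iso.hom_inv_id]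

lemma day_aux_bij (H : Qᵒᵖ ⥤ Type v)
    (hH : ∀ C₁ C₂ : Q, Function.Bijective
      (fun x : H.obj (op (C₁ ⨿ C₂)) =>
        (H.map ((coprod.inl : C₁ ⟶ C₁ ⨿ C₂)).op x,
         H.map ((coprod.inr : C₂ ⟶ C₁ ⨿ C₂)).op x)))
    (hdist : ∀ X C₁ C₂ : Q, Nonempty (IsColimit (BinaryCofan.mk
      (X ◁ (coprod.inl : C₁ ⟶ C₁ ⨿ C₂)) (X ◁ (coprod.inr : C₂ ⟶ C₁ ⨿ C₂)))))
    (C₁ C₂ D : Q) :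
    Function.Bijective
      (fun x : H.obj (op ((C₁ ⨿ C₂) ⊗ D)) =>
        (H.map (((coprod.inl : C₁ ⟶ C₁ ⨿ C₂) ▷ D)).op x,
         H.map (((coprod.inr : C₂ ⟶ C₁ ⨿ C₂) ▷ D)).op x)) := by
  set k := coprod.desc ((coprod.inl : C₁ ⟶ C₁ ⨿ C₂) ▷ D)
      ((coprod.inr : C₂ ⟶ C₁ ⨿ C₂) ▷ D) with hk
  have : IsIso k := day_aux_isIso C₁ C₂ D (hdist D C₁ C₂).some
  have hbij : Function.Bijective (H.map k.op) := by
    rw [← isIso_iff_bijective]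
    infer_instance
  have heq : (fun x : H.obj (op ((C₁ ⨿ C₂) ⊗ D)) =>
        (H.map (((coprod.inl : C₁ ⟶ C₁ ⨿ C₂) ▷ D)).op x,
         H.map (((coprod.inr : C₂ ⟶ C₁ ⨿ C₂) ▷ D)).op x))
      = (fun y : H.obj (op (C₁ ⊗ D ⨿ C₂ ⊗ D)) =>
          (H.map ((coprod.inl : C₁ ⊗ D ⟶ _)).op y,
           H.map ((coprod.inr : C₂ ⊗ D ⟶ _)).op y)) ∘ H.map k.op := by
    funext x
    simp only [Function.comp_apply, ← FunctorToTypes.map_comp_apply, ← op_comp, hk,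
      coprod.inl_desc, coprod.inr_desc]
  rw [heq]
  exact (hH (C₁ ⊗ D) (C₂ ⊗ D)).comp hbij

/-- If `H : Qᵒᵖ → Set` preserves binary products (sends coproducts in `Q` to products in
`Set`) and `G : Qᵒᵖ → Set` is arbitrary, then the Day convolution internal hom
`(G ⊸_Day H)(C) = Nat(G, H(C ⊗ -))` also preserves binary products, provided the tensor
of `Q` distributes over binary coproducts: the canonical comparison map
`(G ⊸ H)(C₁ + C₂) ⟶ (G ⊸ H)(C₁) × (G ⊸ H)(C₂)` is a bijection. -/
theorem day_hom_preserves_products (G H : Qᵒᵖ ⥤ Type v)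
    -- `H` sends binary coproducts in `Q` to binary products in `Set`
    (hH : ∀ C₁ C₂ : Q, Function.Bijective
      (fun x : H.obj (op (C₁ ⨿ C₂)) =>
        (H.map ((coprod.inl : C₁ ⟶ C₁ ⨿ C₂)).op x,
         H.map ((coprod.inr : C₂ ⟶ C₁ ⨿ C₂)).op x)))
    -- the tensor distributes over binary coproducts
    (hdist : ∀ X C₁ C₂ : Q, Nonempty (IsColimit (BinaryCofan.mk
      (X ◁ (coprod.inl : C₁ ⟶ C₁ ⨿ C₂)) (X ◁ (coprod.inr : C₂ ⟶ C₁ ⨿ C₂)))))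
    (C₁ C₂ : Q) :
    Function.Bijective
      (fun α : G ⟶ (tensorLeft (C₁ ⨿ C₂)).op ⋙ H =>
        (α ≫ restrictNat H (coprod.inl : C₁ ⟶ C₁ ⨿ C₂),
         α ≫ restrictNat H (coprod.inr : C₂ ⟶ C₁ ⨿ C₂))) := by
  let e : ∀ D : Q, H.obj (op ((C₁ ⨿ C₂) ⊗ D)) ≃
      H.obj (op (C₁ ⊗ D)) × H.obj (op (C₂ ⊗ D)) :=
    fun D => Equiv.ofBijective _ (day_aux_bij H hH hdist C₁ C₂ D)
  have he : ∀ (D : Q) (z : H.obj (op ((C₁ ⨿ C₂) ⊗ D))),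
      e D z = (H.map (((coprod.inl : C₁ ⟶ C₁ ⨿ C₂) ▷ D)).op z,
               H.map (((coprod.inr : C₂ ⟶ C₁ ⨿ C₂) ▷ D)).op z) := fun _ _ => rfl
  constructor
  · intro α β h
    ext X x
    apply (e X.unop).injective
    rw [he, he]
    have h1 := congrFun (congrArg (fun t => t.1.app X) h) x
    have h2 := congrFun (congrArg (fun t => t.2.app X) h) x
    exact Prod.ext h1 h2
  · rintro ⟨α₁, α₂⟩
    have hc : ∀ (D : Q) p,
        (H.map (((coprod.inl : C₁ ⟶ C₁ ⨿ C₂) ▷ D)).op ((e D).symm p),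
         H.map (((coprod.inr : C₂ ⟶ C₁ ⨿ C₂) ▷ D)).op ((e D).symm p)) = p :=
      fun D p => (he D ((e D).symm p)).symm.trans ((e D).apply_symm_apply p)
    refine ⟨{ app := fun X => ↾fun x => (e X.unop).symm (α₁.app X x, α₂.app X x),
              naturality := ?_ }, ?_⟩
    · intro X Y f
      ext x
      apply (e Y.unop).injective
      show e Y.unop ((e Y.unop).symm (α₁.app Y (G.map f x), α₂.app Y (G.map f x))) =
        e Y.unop (H.map ((C₁ ⨿ C₂) ◁ f.unop).op ((e X.unop).symm (α₁.app X x, α₂.app X x)))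
      dsimp only
      rw [he, he, hc]
      have key : ∀ (C : Q) (j : C ⟶ C₁ ⨿ C₂) z,
          H.map ((j ▷ Y.unop)).op (H.map ((C₁ ⨿ C₂) ◁ f.unop).op z)
          = H.map ((C ◁ f.unop)).op (H.map ((j ▷ X.unop)).op z) := by
        intro C j z
        rw [← FunctorToTypes.map_comp_apply, ← FunctorToTypes.map_comp_apply,
          ← op_comp, ← op_comp, ← whisker_exchange]
      rw [key, key]
      have hX := hc X.unop (α₁.app X x, α₂.app X x)
      rw [Prod.mk.injEq] at hX
      rw [hX.1, hX.2]
      exact Prod.ext (FunctorToTypes.naturality α₁ f x) (FunctorToTypes.naturality α₂ f x)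
    · refine Prod.ext ?_ ?_
      · ext X x
        exact congrArg Prod.fst (hc X.unop (α₁.app X x, α₂.app X x))
      · ext X x
        exact congrArg Prod.snd (hc X.unop (α₁.app X x, α₂.app X x))
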